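/- Let c, p : [0,∞) → ℝ be continuously differentiable and satisfy c' = k1(e0 − c)(s0 − c − p) − k1·K_M·c and p' = k2·c with c(0) = 0, p(0) = 0, where k1, k−1, k2, e0, s0 > 0 and K_M = (k−1+k2)/k1, and let λ = ½(e0+K_M+s0) − ½√((e0+K_M+s0)² − 4e0·s0). Then the region R = {(p,c) : 0 ≤ c ≤ λ, 0 ≤ p, c + p ≤ s0} is positively invariant: for all t ≥ 0, 0 ≤ c(t) ≤ λ, 0 ≤ p(t), and c(t) + p(t) ≤ s0. In particular sup_{t≥0} c(t) ≤ λ. -/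

import Mathlib

open Set Filter Real Topology

private lemma gron {K a b : ℝ} {f f' : ℝ → ℝ} (hab : a ≤ b)
    (hd : ∀ t ∈ Set.Icc a b, HasDerivAt f (f' t) t)
    (hineq : ∀ t ∈ Set.Icc a b, 0 ≤ f' t + K * f t) :
    Real.exp (K * a) * f a ≤ Real.exp (K * b) * f b := by
  have hF : ∀ t ∈ Set.Icc a b, HasDerivAt (fun s => Real.exp (K * s) * f s)
      (Real.exp (K * t) * (f' t + K * f t)) t := by
    intro t ht
    have h1 : HasDerivAt (fun s : ℝ => Real.exp (K * s)) (Real.exp (K * t) * K) t := by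
      simpa using ((hasDerivAt_id t).const_mul K).exp
    have h2 : HasDerivAt (fun s => Real.exp (K * s) * f s) _ t := h1.mul (hd t ht)
    convert h2 using 1
    ring
  have hmono : MonotoneOn (fun s => Real.exp (K * s) * f s) (Set.Icc a b) := by
    apply monotoneOn_of_deriv_nonneg (convex_Icc a b)
    · exact fun t ht => (hF t ht).continuousAt.continuousWithinAt
    · intro t ht
      rw [interior_Icc] at ht
      exact (hF t (Set.Ioo_subset_Icc_self ht)).differentiableAt.differentiableWithinAt
    · intro t ht
      rw [interior_Icc] at ht
      rw [(hF t (Set.Ioo_subset_Icc_self ht)).deriv]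
      exact mul_nonneg (Real.exp_pos _).le (hineq t (Set.Ioo_subset_Icc_self ht))
  exact hmono (Set.left_mem_Icc.mpr hab) (Set.right_mem_Icc.mpr hab) hab

set_option maxHeartbeats 1000000 in
/-- positive invariance of the region {0 ≤ c ≤ λ, 0 ≤ p, c + p ≤ s0}
for the Michaelis–Menten system in the (p,c) phase plane. -/
theorem positive_invariance (k1 km1 k2 e0 s0 KM lam : ℝ)
    (hk1 : 0 < k1) (hkm1 : 0 < km1) (hk2 : 0 < k2) (he0 : 0 < e0) (hs0 : 0 < s0)
    (hKM : KM = (km1 + k2) / k1)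
    (hlam : lam = (e0 + KM + s0) / 2 - Real.sqrt ((e0 + KM + s0) ^ 2 - 4 * e0 * s0) / 2)
    (c p : ℝ → ℝ)
    (hc : ∀ t : ℝ, 0 ≤ t →
      HasDerivAt c (k1 * (e0 - c t) * (s0 - c t - p t) - k1 * KM * c t) t)
    (hp : ∀ t : ℝ, 0 ≤ t → HasDerivAt p (k2 * c t) t)
    (hc' : Continuous (deriv c)) (hp' : Continuous (deriv p))
    (hc0 : c 0 = 0) (hp0 : p 0 = 0) :
    (∀ t : ℝ, 0 ≤ t → 0 ≤ c t ∧ c t ≤ lam ∧ 0 ≤ p t ∧ c t + p t ≤ s0) ∧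
    sSup (c '' Set.Ici (0 : ℝ)) ≤ lam := by
  have hKMpos : 0 < KM := by rw [hKM]; positivity
  have hk1KM : k1 * KM = km1 + k2 := by rw [hKM]; field_simp
  set q := Real.sqrt ((e0 + KM + s0) ^ 2 - 4 * e0 * s0) with hqdef
  have hD : 0 < (e0 + KM + s0) ^ 2 - 4 * e0 * s0 := by nlinarith [sq_nonneg (e0 - s0)]
  have hq0 : 0 < q := Real.sqrt_pos.mpr hD
  have hq2 : q ^ 2 = (e0 + KM + s0) ^ 2 - 4 * e0 * s0 := Real.sq_sqrt hD.le
  have hlam0 : 0 < lam := by rw [hlam]; nlinarith [hq2, hq0, mul_pos he0 hs0]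
  have hlam_s0 : lam < s0 := by rw [hlam]; nlinarith [hq2, hq0, mul_pos hs0 hKMpos]
  have hlam_e0 : lam < e0 := by rw [hlam]; nlinarith [hq2, hq0, mul_pos he0 hKMpos]
  have hlamm : lam * (e0 + KM + s0 - lam) = e0 * s0 := by
    rw [hlam]; linear_combination (-1/4 : ℝ) * hq2
  -- c is positive immediately after 0
  obtain ⟨δ1, hδ1pos, hδ1⟩ : ∃ d > (0:ℝ), ∀ t, 0 < t → t < d → 0 < c t := by
    have hslope : ∀ᶠ t in 𝓝[>] (0:ℝ), 0 < c t := by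
      have h1 := hasDerivAt_iff_tendsto_slope.mp (hc 0 le_rfl)
      rw [hc0, hp0] at h1
      have hpos : (0:ℝ) < k1 * (e0 - 0) * (s0 - 0 - 0) - k1 * KM * 0 := by
        ring_nf; positivity
      have h2 : ∀ᶠ t in 𝓝[≠] (0:ℝ), 0 < slope c 0 t := h1.eventually (lt_mem_nhds hpos)
      have h3 : 𝓝[>] (0:ℝ) ≤ 𝓝[≠] (0:ℝ) := nhdsWithin_mono 0 (fun x hx => ne_of_gt hx)
      filter_upwards [h3 h2, self_mem_nhdsWithin] with t ht ht0
      have htpos : (0:ℝ) < t := ht0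
      rw [slope_def_field, hc0, sub_zero, sub_zero] at ht
      have := mul_pos ht htpos
      rwa [div_mul_cancel₀ _ (ne_of_gt htpos)] at this
    rcases mem_nhdsGT_iff_exists_Ioo_subset.mp hslope with ⟨u, hu, hsub⟩
    exact ⟨u, hu, fun t ht1 ht2 => hsub ⟨ht1, ht2⟩⟩
  have key : ∀ t, 0 ≤ t → 0 ≤ c t ∧ c t ≤ lam ∧ 0 ≤ p t ∧ c t + p t ≤ s0 := by
    by_contra hbad
    rw [not_forall] at hbad
    obtain ⟨t1, ht1⟩ := hbad
    rw [Classical.not_imp] at ht1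
    obtain ⟨ht1pos, ht1bad⟩ := ht1
    set B : Set ℝ := {t | 0 ≤ t ∧ ¬(0 ≤ c t ∧ c t ≤ lam ∧ 0 ≤ p t ∧ c t + p t ≤ s0)}
      with hBdef
    have hBne : B.Nonempty := ⟨t1, ht1pos, ht1bad⟩
    have hBbdd : BddBelow B := ⟨0, fun x hx => hx.1⟩
    set T := sInf B with hTdef
    have hT0 : 0 ≤ T := le_csInf hBne fun x hx => hx.1
    have hgood : ∀ s, 0 ≤ s → s < T →
        (0 ≤ c s ∧ c s ≤ lam ∧ 0 ≤ p s ∧ c s + p s ≤ s0) := by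
      intro s h0 hsT
      by_contra h
      exact absurd (csInf_le hBbdd ⟨h0, h⟩) (not_le.mpr hsT)
    have hQ0 : 0 ≤ c 0 ∧ c 0 ≤ lam ∧ 0 ≤ p 0 ∧ c 0 + p 0 ≤ s0 := by
      rw [hc0, hp0]; exact ⟨le_rfl, hlam0.le, le_rfl, by linarith⟩
    have hQT : 0 ≤ c T ∧ c T ≤ lam ∧ 0 ≤ p T ∧ c T + p T ≤ s0 := by
      rcases eq_or_lt_of_le hT0 with h0T | h0T
      · rw [← h0T]; exact hQ0
      · have hev : ∀ᶠ s in 𝓝[<] T, 0 ≤ c s ∧ c s ≤ lam ∧ 0 ≤ p s ∧ c s + p s ≤ s0 := by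
          have hmem : Set.Ioo 0 T ∈ 𝓝[<] T := Ioo_mem_nhdsLT h0T
          filter_upwards [hmem] with s hs
          exact hgood s hs.1.le hs.2
        have hct : Filter.Tendsto c (𝓝[<] T) (𝓝 (c T)) :=
          ((hc T hT0).continuousAt.continuousWithinAt).tendsto
        have hpt : Filter.Tendsto p (𝓝[<] T) (𝓝 (p T)) :=
          ((hp T hT0).continuousAt.continuousWithinAt).tendsto
        refine ⟨ge_of_tendsto hct (hev.mono fun s hs => hs.1),
          le_of_tendsto hct (hev.mono fun s hs => hs.2.1),
          ge_of_tendsto hpt (hev.mono fun s hs => hs.2.2.1),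
          le_of_tendsto (hct.add hpt) (hev.mono fun s hs => hs.2.2.2)⟩
    have hP : ∀ t ∈ Set.Icc (0:ℝ) T, 0 ≤ c t ∧ c t ≤ lam ∧ 0 ≤ p t ∧ c t + p t ≤ s0 := by
      rintro t ⟨h0, hle⟩
      rcases lt_or_eq_of_le hle with h | h
      · exact hgood t h0 h
      · rw [h]; exact hQT
    -- strict inequality: c + p < s0 on [0,T]
    have hu_pos : ∀ t ∈ Set.Icc (0:ℝ) T, 0 < s0 - (c t + p t) := by
      intro t ht
      have hsub : Set.Icc (0:ℝ) t ⊆ Set.Icc 0 T := Set.Icc_subset_Icc le_rfl ht.2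
      have hd : ∀ s ∈ Set.Icc (0:ℝ) t, HasDerivAt (fun s => s0 - (c s + p s))
          (-((k1 * (e0 - c s) * (s0 - c s - p s) - k1 * KM * c s) + k2 * c s)) s :=
        fun s hs => ((hc s hs.1).add (hp s hs.1)).const_sub s0
      have hineq : ∀ s ∈ Set.Icc (0:ℝ) t,
          0 ≤ -((k1 * (e0 - c s) * (s0 - c s - p s) - k1 * KM * c s) + k2 * c s)
              + (k1 * e0) * (s0 - (c s + p s)) := by
        intro s hs
        obtain ⟨h1, h2, h3, h4⟩ := hP s (hsub hs)
        have heq : -((k1 * (e0 - c s) * (s0 - c s - p s) - k1 * KM * c s) + k2 * c s)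
            + (k1 * e0) * (s0 - (c s + p s))
            = k1 * c s * (s0 - c s - p s) + km1 * c s := by
          linear_combination (c s) * hk1KM
        rw [heq]
        have hA : 0 ≤ k1 * c s * (s0 - c s - p s) :=
          mul_nonneg (mul_nonneg hk1.le h1) (by linarith)
        have hB : 0 ≤ km1 * c s := mul_nonneg hkm1.le h1
        linarith
      have hg := gron ht.1 hd hineq
      rw [hc0, hp0, mul_zero, Real.exp_zero] at hg
      by_contra hcon
      push_neg at hcon
      have := mul_nonpos_of_nonneg_of_nonpos (Real.exp_pos (k1 * e0 * t)).le hcon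
      simp only [one_mul, add_zero, sub_zero] at hg
      linarith
    -- strict inequality: c < lam on [0,T]
    have hv_pos : ∀ t ∈ Set.Icc (0:ℝ) T, 0 < lam - c t := by
      intro t ht
      have hsub : Set.Icc (0:ℝ) t ⊆ Set.Icc 0 T := Set.Icc_subset_Icc le_rfl ht.2
      have hd : ∀ s ∈ Set.Icc (0:ℝ) t, HasDerivAt (fun s => lam - c s)
          (-(k1 * (e0 - c s) * (s0 - c s - p s) - k1 * KM * c s)) s :=
        fun s hs => (hc s hs.1).const_sub lam
      have hineq : ∀ s ∈ Set.Icc (0:ℝ) t,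
          0 ≤ -(k1 * (e0 - c s) * (s0 - c s - p s) - k1 * KM * c s)
              + (k1 * (e0 + KM + s0 - lam)) * (lam - c s) := by
        intro s hs
        obtain ⟨h1, h2, h3, h4⟩ := hP s (hsub hs)
        have heq : -(k1 * (e0 - c s) * (s0 - c s - p s) - k1 * KM * c s)
            + (k1 * (e0 + KM + s0 - lam)) * (lam - c s)
            = k1 * c s * (lam - c s) + k1 * (e0 - c s) * p s := by
          linear_combination k1 * hlamm
        rw [heq]
        have hA : 0 ≤ k1 * c s * (lam - c s) :=
          mul_nonneg (mul_nonneg hk1.le h1) (by linarith)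
        have hB : 0 ≤ k1 * (e0 - c s) * p s :=
          mul_nonneg (mul_nonneg hk1.le (by linarith)) h3
        linarith
      have hg := gron ht.1 hd hineq
      rw [hc0, mul_zero, Real.exp_zero, sub_zero] at hg
      by_contra hcon
      push_neg at hcon
      have := mul_nonpos_of_nonneg_of_nonpos
        (Real.exp_pos (k1 * (e0 + KM + s0 - lam) * t)).le hcon
      simp only [one_mul] at hg
      linarith
    -- strict positivity of c on (0,T]
    have hc_pos : ∀ t ∈ Set.Icc (0:ℝ) T, 0 < t → 0 < c t := by
      intro t ht htpos
      set t0 := min (δ1 / 2) (t / 2) with ht0def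
      have ht0pos : 0 < t0 := lt_min (by linarith) (by linarith)
      have ht0t : t0 ≤ t := le_trans (min_le_right _ _) (by linarith)
      have hct0 : 0 < c t0 :=
        hδ1 t0 ht0pos (lt_of_le_of_lt (min_le_left _ _) (by linarith))
      have hsub : Set.Icc t0 t ⊆ Set.Icc 0 T := Set.Icc_subset_Icc ht0pos.le ht.2
      have hd : ∀ s ∈ Set.Icc t0 t,
          HasDerivAt c (k1 * (e0 - c s) * (s0 - c s - p s) - k1 * KM * c s) s :=
        fun s hs => hc s (le_trans ht0pos.le hs.1)
      have hineq : ∀ s ∈ Set.Icc t0 t,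
          0 ≤ (k1 * (e0 - c s) * (s0 - c s - p s) - k1 * KM * c s) + (k1 * KM) * c s := by
        intro s hs
        obtain ⟨h1, h2, h3, h4⟩ := hP s (hsub hs)
        have := mul_nonneg (mul_nonneg hk1.le (by linarith : (0:ℝ) ≤ e0 - c s))
          (by linarith : (0:ℝ) ≤ s0 - c s - p s)
        linarith
      have hg := gron ht0t hd hineq
      have h1 : 0 < Real.exp (k1 * KM * t0) * c t0 :=
        mul_pos (Real.exp_pos _) hct0
      by_contra hcon
      push_neg at hcon
      have := mul_nonpos_of_nonneg_of_nonpos (Real.exp_pos (k1 * KM * t)).le hcon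
      linarith
    -- now split: T = 0 or T > 0
    rcases eq_or_lt_of_le hT0 with hT0' | hTpos
    · -- T = 0 : find δ with region holding on [0, δ), contradicting sInf
      have hcc : ContinuousAt c 0 := (hc 0 le_rfl).continuousAt
      have hpc : ContinuousAt p 0 := (hp 0 le_rfl).continuousAt
      have e1 : ∀ᶠ s in 𝓝 (0:ℝ), c s < lam :=
        hcc.eventually_lt_const (by rw [hc0]; exact hlam0)
      have e2 : ∀ᶠ s in 𝓝 (0:ℝ), c s + p s < s0 :=
        (hcc.add hpc).eventually_lt_const (show c 0 + p 0 < s0 by rw [hc0, hp0]; linarith)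
      obtain ⟨δ2, hδ2pos, hδ2⟩ := Metric.eventually_nhds_iff.mp (e1.and e2)
      set δ := min (δ1 / 2) (δ2 / 2) with hδdef
      have hδpos : 0 < δ := lt_min (by linarith) (by linarith)
      obtain ⟨t', ht'B, ht'lt⟩ :=
        exists_lt_of_csInf_lt hBne (show sInf B < T + δ by rw [← hTdef]; linarith)
      obtain ⟨ht'0, ht'bad⟩ := ht'B
      apply ht'bad
      rcases eq_or_lt_of_le ht'0 with h0 | h0
      · rw [← h0]; exact hQ0
      · have ht'T : t' < δ := by rw [← hT0'] at ht'lt; linarith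
        have ht'δ1 : t' < δ1 := lt_of_lt_of_le ht'T (le_trans (min_le_left _ _) (by linarith))
        have ht'δ2 : dist t' (0:ℝ) < δ2 := by
          rw [Real.dist_eq, sub_zero, abs_of_pos h0]
          exact lt_of_lt_of_le ht'T (le_trans (min_le_right _ _) (by linarith))
        obtain ⟨hlt1, hlt2⟩ := hδ2 ht'δ2
        have hcpos : 0 < c t' := hδ1 t' h0 ht'δ1
        have hpnn : 0 ≤ p t' := by
          have hpmono : MonotoneOn p (Set.Icc 0 t') := by
            apply monotoneOn_of_deriv_nonneg (convex_Icc _ _)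
            · exact fun s hs => (hp s hs.1).continuousAt.continuousWithinAt
            · intro s hs
              rw [interior_Icc] at hs
              exact (hp s hs.1.le).differentiableAt.differentiableWithinAt
            · intro s hs
              rw [interior_Icc] at hs
              rw [(hp s hs.1.le).deriv]
              exact mul_nonneg hk2.le (hδ1 s hs.1 (lt_trans hs.2 ht'δ1)).le
          have := hpmono (Set.left_mem_Icc.mpr ht'0) (Set.right_mem_Icc.mpr ht'0) ht'0
          rwa [hp0] at this
        exact ⟨hcpos.le, hlt1.le, hpnn, hlt2.le⟩
    · -- T > 0 : strict inequalities at T, extend past T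
      have hTmem : T ∈ Set.Icc (0:ℝ) T := Set.right_mem_Icc.mpr hT0
      have hcT : 0 < c T := hc_pos T hTmem hTpos
      have hvT : 0 < lam - c T := hv_pos T hTmem
      have huT : 0 < s0 - (c T + p T) := hu_pos T hTmem
      have hpT : 0 < p T := by
        set t0 := min (δ1 / 2) (T / 2) with ht0def
        have ht0pos : 0 < t0 := lt_min (by linarith) (by linarith)
        have ht0T : t0 < T := lt_of_le_of_lt (min_le_right _ _) (by linarith)
        have hmono : StrictMonoOn p (Set.Icc t0 T) := by
          apply strictMonoOn_of_deriv_pos (convex_Icc _ _)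
          · exact fun s hs =>
              (hp s (le_trans ht0pos.le hs.1)).continuousAt.continuousWithinAt
          · intro s hs
            rw [interior_Icc] at hs
            have hs0' : (0:ℝ) ≤ s := le_trans ht0pos.le hs.1.le
            rw [(hp s hs0').deriv]
            exact mul_pos hk2 (hc_pos s ⟨hs0', hs.2.le⟩ (lt_of_lt_of_le ht0pos hs.1.le))
        have h1 : p t0 < p T :=
          hmono (Set.left_mem_Icc.mpr ht0T.le) (Set.right_mem_Icc.mpr ht0T.le) ht0T
        have h2 : 0 ≤ p t0 := (hP t0 ⟨ht0pos.le, ht0T.le⟩).2.2.1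
        linarith
      have hcc : ContinuousAt c T := (hc T hT0).continuousAt
      have hpc : ContinuousAt p T := (hp T hT0).continuousAt
      have e1 : ∀ᶠ s in 𝓝 T, 0 < c s := hcc.eventually_const_lt (by exact hcT)
      have e2 : ∀ᶠ s in 𝓝 T, c s < lam := hcc.eventually_lt_const (by linarith)
      have e3 : ∀ᶠ s in 𝓝 T, 0 < p s := hpc.eventually_const_lt (by exact hpT)
      have e4 : ∀ᶠ s in 𝓝 T, c s + p s < s0 :=
        (hcc.add hpc).eventually_lt_const (show c T + p T < s0 by linarith)
      obtain ⟨δ2, hδ2pos, hδ2⟩ := Metric.eventually_nhds_iff.mp ((e1.and e2).and (e3.and e4))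
      obtain ⟨t', ht'B, ht'lt⟩ :=
        exists_lt_of_csInf_lt hBne (show sInf B < T + δ2 by rw [← hTdef]; linarith)
      obtain ⟨ht'0, ht'bad⟩ := ht'B
      apply ht'bad
      rcases le_or_gt t' T with hle | hgt
      · exact hP t' ⟨ht'0, hle⟩
      · have hdist : dist t' T < δ2 := by
          rw [Real.dist_eq, abs_of_pos (by linarith : (0:ℝ) < t' - T)]
          linarith
        obtain ⟨⟨ha, hb⟩, hc', hd'⟩ := hδ2 hdist
        exact ⟨ha.le, hb.le, hc'.le, hd'.le⟩
  refine ⟨key, Real.sSup_le ?_ hlam0.le⟩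
  rintro x ⟨t, ht, rfl⟩
  exact (key t ht).2.1
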